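/- Let 0 < q < 1, n ∈ ℕ₊, and Θ ∈ (−π, π). Define, for half-integers m with −(n−1)/2 ≤ m ≤ (n−1)/2, Ξ_m = (q^{m−1/2} e^{iΘ/2} + q^{−m+1/2} e^{−iΘ/2}) / (q^{m+1/2} e^{iΘ/2} + q^{−m−1/2} e^{−iΘ/2}). Then for each k with 2 ≤ k ≤ n, the product Π_{j=k}^{n} Ξ_{j−(n+1)/2} has absolute value strictly less than 1. -/

import Mathlib

open Complex

private lemma bethe_telescope (G : ℕ → ℂ) (hG : ∀ j, G j ≠ 0) : ∀ n k : ℕ, k ≤ n →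
    ∏ j ∈ Finset.Icc k n, G j / G (j+1) = G k / G (n+1) := by
  intro n
  induction n with
  | zero => intro k hk; interval_cases k; simp
  | succ n ih =>
    intro k hk
    rcases Nat.lt_or_ge k (n+1) with h | h
    · rw [Finset.prod_Icc_succ_top (by omega), ih k (by omega), div_mul_div_comm,
        mul_comm (G k) (G (n+1)), mul_div_mul_left _ _ (hG (n+1))]
    · have : k = n+1 := by omega
      subst this; simp

private lemma bethe_mono (q : ℝ) (hq0 : 0 < q) (hq1 : q < 1) (a b : ℝ) (hab : |a| < b) :
    q ^ a + q ^ (-a) < q ^ b + q ^ (-b) := by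
  have h1 : -b < a := by cases abs_lt.mp hab; linarith
  have h2 : a < b := by cases abs_lt.mp hab; linarith
  have hba : q ^ (-a) < q ^ (-b) := Real.rpow_lt_rpow_of_exponent_gt hq0 hq1 (by linarith)
  have hs : q ^ (a + b) < 1 := by
    have := Real.rpow_lt_rpow_of_exponent_gt hq0 hq1 (show (0:ℝ) < a + b by linarith)
    rwa [Real.rpow_zero] at this
  have hs0 : 0 < q ^ (a + b) := Real.rpow_pos_of_pos hq0 _
  have e1 : q ^ (-b) * q ^ (a + b) = q ^ a := by
    rw [← Real.rpow_add hq0]; ring_nf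
  have e2 : q ^ (-a) * q ^ (a + b) = q ^ b := by
    rw [← Real.rpow_add hq0]; ring_nf
  nlinarith [mul_pos (sub_pos.mpr hba) (sub_pos.mpr hs)]

/-- The partial products of the Bethe ansatz factors have modulus strictly
less than one, which yields normalizability of the droplet eigenvector. -/
theorem bethe_partial_products_abs_lt_one
    (q : ℝ) (hq0 : 0 < q) (hq1 : q < 1)
    (n : ℕ) (hn : 0 < n)
    (Θ : ℝ) (hΘ : Θ ∈ Set.Ioo (-Real.pi) Real.pi)
    (Xi : ℝ → ℂ)
    (hXi : ∀ m : ℝ, Xi m =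
      ((q ^ (m - 1/2) : ℝ) * Complex.exp (Θ/2 * I)
          + (q ^ (-m + 1/2) : ℝ) * Complex.exp (-(Θ/2) * I))
        / ((q ^ (m + 1/2) : ℝ) * Complex.exp (Θ/2 * I)
          + (q ^ (-m - 1/2) : ℝ) * Complex.exp (-(Θ/2) * I))) :
    ∀ k : ℕ, 2 ≤ k → k ≤ n →
      ‖∏ j ∈ Finset.Icc k n, Xi ((j:ℝ) - ((n:ℝ) + 1) / 2)‖ < 1 := by
  intro k hk2 hkn
  set f : ℝ → ℂ := fun t => (q ^ t : ℝ) * Complex.exp (Θ/2 * I)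
      + (q ^ (-t) : ℝ) * Complex.exp (-(Θ/2) * I) with hf
  -- modulus squared formula
  have habs : ∀ t : ℝ, (‖f t‖)^2 = q ^ (2*t) + q ^ (-(2*t)) + 2 * Real.cos Θ := by
    intro t
    have h1 : f t
      = (((q^t + q^(-t)) * Real.cos (Θ/2) : ℝ) : ℂ)
        + (((q^t - q^(-t)) * Real.sin (Θ/2) : ℝ) : ℂ) * I := by
      rw [hf]
      have e1 : (↑Θ/2 * I : ℂ) = (↑(Θ/2) : ℂ) * I := by push_cast; ring
      have e2 : (-(↑Θ/2) * I : ℂ) = (↑(-(Θ/2)) : ℂ) * I := by push_cast; ring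
      simp only
      rw [e1, e2, Complex.exp_mul_I, Complex.exp_mul_I]
      simp only [← Complex.ofReal_cos, ← Complex.ofReal_sin, Real.cos_neg, Real.sin_neg]
      push_cast
      ring
    rw [h1, Complex.sq_norm, Complex.normSq_add_mul_I]
    have hAB : q^t * q^(-t) = 1 := by
      rw [← Real.rpow_add hq0]; simp
    have hA2 : (q^t)^2 = q^(2*t) := by
      rw [← Real.rpow_natCast (q^t) 2, ← Real.rpow_mul hq0.le]; ring_nf
    have hB2 : (q^(-t))^2 = q^(-(2*t)) := by
      rw [← Real.rpow_natCast (q^(-t)) 2, ← Real.rpow_mul hq0.le]; ring_nf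
    have hc : Real.cos (Θ/2)^2 = 1/2 + Real.cos Θ / 2 := by
      rw [Real.cos_sq, show 2*(Θ/2) = Θ by ring]
    have hs : Real.sin (Θ/2)^2 = 1 - Real.cos (Θ/2)^2 := by rw [Real.sin_sq]
    nlinarith [hc, hs, hAB, hA2, hB2]
  -- cos Θ > -1
  have hcos : -1 < Real.cos Θ := by
    have hhalf : 0 < Real.cos (Θ/2) := by
      apply Real.cos_pos_of_mem_Ioo
      constructor
      · have := hΘ.1; linarith [Real.pi_pos]
      · have := hΘ.2; linarith [Real.pi_pos]
    have hc : Real.cos (Θ/2)^2 = 1/2 + Real.cos Θ / 2 := by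
      rw [Real.cos_sq, show 2*(Θ/2) = Θ by ring]
    nlinarith
  -- positivity of modulus squared
  have hpos : ∀ t : ℝ, 0 < (‖f t‖)^2 := by
    intro t
    rw [habs t]
    have hAB : q^(2*t) * q^(-(2*t)) = 1 := by
      rw [← Real.rpow_add hq0]; simp
    have h1 : 0 < q^(2*t) := Real.rpow_pos_of_pos hq0 _
    have h2 : 0 < q^(-(2*t)) := Real.rpow_pos_of_pos hq0 _
    nlinarith [sq_nonneg (q^(2*t) - 1), hcos, mul_pos h1 h2]
  have hne : ∀ t : ℝ, f t ≠ 0 := by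
    intro t h
    have := hpos t
    rw [h] at this; simp at this
  -- the telescoping function
  set G : ℕ → ℂ := fun j => f ((j:ℝ) - (n:ℝ)/2 - 1) with hG
  have hGne : ∀ j, G j ≠ 0 := fun j => hne _
  have key : ∀ j ∈ Finset.Icc k n, Xi ((j:ℝ) - ((n:ℝ) + 1) / 2) = G j / G (j+1) := by
    intro j _
    rw [hXi, hG, hf]
    simp only
    push_cast
    rw [show (j:ℝ) - ((n:ℝ)+1)/2 - 1/2 = (j:ℝ) - (n:ℝ)/2 - 1 by ring,
      show -((j:ℝ) - ((n:ℝ)+1)/2) + 1/2 = -((j:ℝ) - (n:ℝ)/2 - 1) by ring,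
      show (j:ℝ) - ((n:ℝ)+1)/2 + 1/2 = (j:ℝ) + 1 - (n:ℝ)/2 - 1 by ring,
      show -((j:ℝ) - ((n:ℝ)+1)/2) - 1/2 = -((j:ℝ) + 1 - (n:ℝ)/2 - 1) by ring]
  rw [Finset.prod_congr rfl key, bethe_telescope G hGne n k hkn, norm_div]
  have hb : 0 < ‖G (n+1)‖ := norm_pos_iff.mpr (hGne (n+1))
  rw [div_lt_one hb]
  -- compare the moduli
  have ha := habs ((k:ℝ) - (n:ℝ)/2 - 1)
  have hb2 := habs (((n:ℕ)+1:ℕ) - (n:ℝ)/2 - 1)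
  have hmono := bethe_mono q hq0 hq1 (2*((k:ℝ) - (n:ℝ)/2 - 1)) (2*((((n:ℕ)+1:ℕ):ℝ) - (n:ℝ)/2 - 1)) ?_
  · have hsq : (‖G k‖)^2 < (‖G (n+1)‖)^2 := by
      rw [hG]; simp only; push_cast
      rw [ha]
      rw [show ((((n:ℕ)+1:ℕ):ℝ) - (n:ℝ)/2 - 1) = ((n:ℝ)+1 - (n:ℝ)/2 - 1) by push_cast; ring] at hb2
      rw [hb2]
      rw [show (2*((((n:ℕ)+1:ℕ):ℝ) - (n:ℝ)/2 - 1)) = 2*((n:ℝ)+1 - (n:ℝ)/2 - 1) by push_cast; ring] at hmono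
      linarith
    exact lt_of_pow_lt_pow_left₀ 2 (norm_nonneg _) hsq
  · rw [abs_lt]
    have hn2 : (2:ℝ) ≤ (k:ℝ) := by exact_mod_cast hk2
    have hkn' : (k:ℝ) ≤ (n:ℝ) := by exact_mod_cast hkn
    constructor <;> push_cast <;> nlinarith
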